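/- As formal power series in t with rational coefficients, ∏_{k=1}^∞ exp(t^k / ((q^k - 1) k)) = ∏_{i=1}^∞ 1/(1 - q^{-i} t), for any real q > 1. -/

import Mathlib

open Filter Topology PowerSeries

/-- The formal power series `exp (c * t^k)` in `ℝ⟦t⟧`: its coefficient of `t^m` is
`c^(m/k) / (m/k)!` when `k ∣ m`, and `0` otherwise. -/
noncomputable def expPow (c : ℝ) (k : ℕ) : PowerSeries ℝ :=
  PowerSeries.mk fun m => if k ∣ m then c ^ (m / k) / (Nat.factorial (m / k)) else 0

lemma coeff_expPow (c : ℝ) (k m : ℕ) :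
    PowerSeries.coeff m (expPow c k) =
      if k ∣ m then c ^ (m / k) / (Nat.factorial (m / k)) else 0 :=
  PowerSeries.coeff_mk _ _

lemma constantCoeff_expPow (c : ℝ) (k : ℕ) :
    PowerSeries.constantCoeff (expPow c k) = 1 := by
  rw [← PowerSeries.coeff_zero_eq_constantCoeff, coeff_expPow]
  simp

lemma expPow_zero_left (k : ℕ) (hk : k ≠ 0) : expPow 0 k = 1 := by
  ext m
  rw [coeff_expPow, PowerSeries.coeff_one]
  rcases Nat.eq_zero_or_pos m with h | h
  · simp [h]
  · rw [if_neg h.ne']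
    split_ifs with hdvd
    · rw [zero_pow (Nat.div_pos (Nat.le_of_dvd h hdvd) (Nat.pos_of_ne_zero hk)).ne', zero_div]
    · rfl

lemma expPow_mul_expPow (a b : ℝ) (k : ℕ) (hk : k ≠ 0) :
    expPow a k * expPow b k = expPow (a + b) k := by
  have hk' : 0 < k := Nat.pos_of_ne_zero hk
  ext m
  rw [PowerSeries.coeff_mul, coeff_expPow]
  rw [Finset.Nat.sum_antidiagonal_eq_sum_range_succ_mk]
  by_cases hdvd : k ∣ m
  · obtain ⟨d, rfl⟩ := hdvd
    rw [if_pos ⟨d, rfl⟩, Nat.mul_div_cancel_left d hk']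
    have hsub : (Finset.range (d + 1)).image (k * ·) ⊆ Finset.range (k * d + 1) := by
      intro x hx
      simp only [Finset.mem_image, Finset.mem_range] at hx ⊢
      obtain ⟨u, hu, rfl⟩ := hx
      exact Nat.lt_succ_of_le (Nat.mul_le_mul_left k (Nat.lt_succ_iff.mp hu))
    rw [← Finset.sum_subset hsub]
    · rw [Finset.sum_image (fun x _ y _ h => Nat.eq_of_mul_eq_mul_left hk' h)]
      have key : ∀ u ∈ Finset.range (d + 1),
          PowerSeries.coeff (k * u) (expPow a k) *
            PowerSeries.coeff (k * d - k * u) (expPow b k)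
          = a ^ u * b ^ (d - u) * (d.choose u) / d.factorial := by
        intro u hu
        have hud : u ≤ d := Nat.lt_succ_iff.mp (Finset.mem_range.mp hu)
        obtain ⟨e, rfl⟩ : ∃ e, d = u + e := ⟨d - u, by omega⟩
        have h1 : k * (u + e) - k * u = k * e := by rw [Nat.mul_add]; omega
        have h5 : u + e - u = e := by omega
        rw [coeff_expPow, coeff_expPow, h1, if_pos ⟨u, rfl⟩, if_pos ⟨e, rfl⟩,
          Nat.mul_div_cancel_left u hk', Nat.mul_div_cancel_left e hk',
          Nat.cast_choose ℝ hud, h5]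
        have h2 : (u.factorial : ℝ) ≠ 0 := Nat.cast_ne_zero.mpr u.factorial_ne_zero
        have h3 : (e.factorial : ℝ) ≠ 0 := Nat.cast_ne_zero.mpr e.factorial_ne_zero
        have h4 : ((u + e).factorial : ℝ) ≠ 0 := Nat.cast_ne_zero.mpr (u + e).factorial_ne_zero
        field_simp
      rw [Finset.sum_congr rfl key, ← Finset.sum_div, ← Commute.add_pow (Commute.all a b)]
    · intro x hx hnx
      rw [coeff_expPow, if_neg, zero_mul]
      intro hdx
      apply hnx
      simp only [Finset.mem_image, Finset.mem_range]
      have hxle : x ≤ k * d := Nat.lt_succ_iff.mp (Finset.mem_range.mp hx)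
      refine ⟨x / k, ?_, Nat.mul_div_cancel' hdx⟩
      have h6 := Nat.div_le_div_right (c := k) hxle
      rw [Nat.mul_div_cancel_left d hk'] at h6
      omega
  · rw [if_neg hdvd]
    apply Finset.sum_eq_zero
    intro i hi
    have him : i ≤ m := Nat.lt_succ_iff.mp (Finset.mem_range.mp hi)
    simp only [coeff_expPow]
    rcases Decidable.em (k ∣ i) with h1 | h1
    · have h2 : ¬ k ∣ m - i := by
        intro h2
        have h3 := Nat.dvd_add h1 h2
        rw [Nat.add_sub_cancel' him] at h3
        exact hdvd h3
      simp [h1, h2]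
    · simp [h1]

lemma coeff_X_pow_mul_ps (f : PowerSeries ℝ) (j m : ℕ) :
    PowerSeries.coeff m (X ^ j * f) =
      if j ≤ m then PowerSeries.coeff (m - j) f else 0 := by
  split_ifs with h
  · obtain ⟨e, rfl⟩ : ∃ e, m = e + j := ⟨m - j, by omega⟩
    rw [Nat.add_sub_cancel, PowerSeries.coeff_X_pow_mul]
  · rw [PowerSeries.coeff_mul]
    apply Finset.sum_eq_zero
    intro p hp
    have := Finset.HasAntidiagonal.mem_antidiagonal.mp hp
    rw [PowerSeries.coeff_X_pow, if_neg (by omega), zero_mul]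

lemma derivative_expPow (c : ℝ) (k : ℕ) (hk : k ≠ 0) :
    d⁄dX ℝ (expPow c k) = (C (c * k) * X ^ (k - 1)) * expPow c k := by
  have hk' : 0 < k := Nat.pos_of_ne_zero hk
  ext m
  rw [PowerSeries.coeff_derivative, coeff_expPow, mul_assoc, PowerSeries.coeff_C_mul,
    coeff_X_pow_mul_ps]
  by_cases hdvd : k ∣ m + 1
  · obtain ⟨j, hj⟩ := hdvd
    have hj1 : 1 ≤ j := by
      rcases Nat.eq_zero_or_pos j with h | h
      · subst h; rw [Nat.mul_zero] at hj; omega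
      · exact h
    have hkm : k ≤ m + 1 := by
      calc k = k * 1 := (Nat.mul_one k).symm
      _ ≤ k * j := Nat.mul_le_mul_left k hj1
      _ = m + 1 := hj.symm
    have hle : k - 1 ≤ m := by omega
    have hsub : m - (k - 1) = k * (j - 1) := by
      rw [Nat.mul_sub, Nat.mul_one]; omega
    rw [if_pos ⟨j, hj⟩, if_pos hle, hsub, coeff_expPow, if_pos ⟨j - 1, rfl⟩,
      Nat.mul_div_cancel_left (j - 1) hk', hj, Nat.mul_div_cancel_left j hk']
    obtain ⟨i, rfl⟩ : ∃ i, j = i + 1 := ⟨j - 1, by omega⟩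
    simp only [Nat.add_sub_cancel]
    rw [Nat.factorial_succ, pow_succ]
    have h2 : (i.factorial : ℝ) ≠ 0 := Nat.cast_ne_zero.mpr i.factorial_ne_zero
    have h3 : ((i:ℝ) + 1) ≠ 0 := by positivity
    have hm : ((m:ℝ) + 1) = (k:ℝ) * ((i:ℝ) + 1) := by exact_mod_cast hj
    push_cast
    field_simp
    linear_combination (c * c ^ i) * hm
  · rw [if_neg hdvd]
    split_ifs with hle
    · have hnd : ¬ k ∣ m - (k - 1) := by
        intro hd
        obtain ⟨j, hj⟩ := hd
        exact hdvd ⟨j + 1, by rw [Nat.mul_add, Nat.mul_one]; omega⟩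
      rw [coeff_expPow, if_neg hnd, mul_zero, zero_mul]
    · rw [mul_zero, zero_mul]

lemma derivative_prod (s : Finset ℕ) (f g : ℕ → PowerSeries ℝ)
    (h : ∀ k ∈ s, d⁄dX ℝ (f k) = g k * f k) :
    d⁄dX ℝ (∏ k ∈ s, f k) = (∑ k ∈ s, g k) * ∏ k ∈ s, f k := by
  induction s using Finset.cons_induction with
  | empty => simp
  | cons a s ha ih =>
    rw [Finset.prod_cons, Derivation.leibniz, smul_eq_mul, smul_eq_mul,
      ih (fun k hk => h k (Finset.mem_cons_of_mem hk)), h a (Finset.mem_cons_self a s),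
      Finset.sum_cons]
    ring

lemma coeff_prod_expPow_geom (c : ℝ) (n : ℕ) :
    ∀ m, m ≤ n →
      PowerSeries.coeff m (∏ k ∈ Finset.Icc 1 n, expPow (c ^ k / k) k) = c ^ m := by
  set F := ∏ k ∈ Finset.Icc 1 n, expPow (c ^ k / k) k with hF
  have hconst : PowerSeries.coeff 0 F = 1 := by
    rw [PowerSeries.coeff_zero_eq_constantCoeff, hF, map_prod]
    exact Finset.prod_eq_one fun k _ => constantCoeff_expPow _ _
  have hder : d⁄dX ℝ F = (∑ k ∈ Finset.Icc 1 n, C (c ^ k) * X ^ (k - 1)) * F := by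
    rw [hF]
    apply derivative_prod
    intro k hk
    have hk1 : k ≠ 0 := by have := (Finset.mem_Icc.mp hk).1; omega
    rw [derivative_expPow _ _ hk1,
      show c ^ k / (k : ℝ) * k = c ^ k from
        div_mul_cancel₀ _ (Nat.cast_ne_zero.mpr hk1)]
  have htel : (1 - C c * X) * (∑ k ∈ Finset.Icc 1 n, C (c ^ k) * X ^ (k - 1))
      = C c - C (c ^ (n + 1)) * X ^ n := by
    have h1 : ∑ k ∈ Finset.Icc 1 n, C (c ^ k) * X ^ (k - 1)
        = ∑ i ∈ Finset.range n, C (c ^ (i + 1)) * X ^ i := by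
      rw [← Finset.Ico_add_one_right_eq_Icc, Finset.sum_Ico_eq_sum_range]
      apply Finset.sum_congr (by simp)
      intro i _
      have e1 : 1 + i = i + 1 := by omega
      rw [e1, Nat.add_sub_cancel]
    rw [h1, sub_mul, one_mul, Finset.mul_sum]
    have h2 : ∀ i ∈ Finset.range n, C c * X * (C (c ^ (i + 1)) * X ^ i)
        = C (c ^ (i + 1 + 1)) * X ^ (i + 1) := by
      intro i _
      rw [show C (c ^ (i + 1 + 1)) = C c * C (c ^ (i + 1)) from by
        rw [← map_mul, ← pow_succ']]
      ring
    rw [Finset.sum_congr rfl h2, ← Finset.sum_sub_distrib,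
      Finset.sum_range_sub' (fun i => C (c ^ (i + 1)) * X ^ i)]
    simp [pow_one]
  have hH : ∀ j : ℕ, j + 1 ≤ n →
      PowerSeries.coeff (j + 1) ((1 - C c * X) * F) = 0 := by
    intro j hj
    have hd1 : d⁄dX ℝ (1 - C c * X) = - C c := by
      rw [map_sub, show (C c * X : PowerSeries ℝ) = c • X from
        (PowerSeries.smul_eq_C_mul X c).symm, Derivation.map_smul,
        PowerSeries.derivative_X, Derivation.map_one_eq_zero,
        PowerSeries.smul_eq_C_mul, mul_one, zero_sub]
    have hder2 : d⁄dX ℝ ((1 - C c * X) * F)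
        = - (C (c ^ (n + 1)) * (X ^ n * F)) := by
      rw [Derivation.leibniz, smul_eq_mul, smul_eq_mul, hder, hd1, ← mul_assoc, htel]
      ring
    have h3 := congrArg (PowerSeries.coeff j) hder2
    rw [PowerSeries.coeff_derivative, map_neg, PowerSeries.coeff_C_mul,
      coeff_X_pow_mul_ps, if_neg (by omega), mul_zero, neg_zero] at h3
    have hj1 : ((j : ℝ) + 1) ≠ 0 := by positivity
    exact (mul_eq_zero.mp h3).resolve_right hj1
  have hrec : ∀ m : ℕ, PowerSeries.coeff (m + 1) ((1 - C c * X) * F)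
      = PowerSeries.coeff (m + 1) F - c * PowerSeries.coeff m F := by
    intro m
    rw [show (1 - C c * X) * F = F - C c * (X * F) from by ring,
      map_sub, PowerSeries.coeff_C_mul, PowerSeries.coeff_succ_X_mul]
  intro m
  induction m with
  | zero => intro _; simpa using hconst
  | succ m ih =>
    intro hm
    have h1 := hH m hm
    rw [hrec m, ih (by omega)] at h1
    have h4 : PowerSeries.coeff (m + 1) F = c * c ^ m := by linarith
    rw [h4, pow_succ]; ring

lemma coeff_inv_one_sub_CX (r : ℝ) (m : ℕ) :
    PowerSeries.coeff m ((1 - C r * X)⁻¹) = r ^ m := by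
  have h0 : PowerSeries.constantCoeff (1 - C r * X) ≠ 0 := by simp
  have key : (PowerSeries.mk fun i => (r : ℝ) ^ i) = (1 - C r * X)⁻¹ := by
    rw [PowerSeries.eq_inv_iff_mul_eq_one h0]
    ext i
    rw [show (PowerSeries.mk fun i => (r : ℝ) ^ i) * (1 - C r * X)
        = (PowerSeries.mk fun i => (r : ℝ) ^ i)
          - C r * (X * PowerSeries.mk fun i => (r : ℝ) ^ i) from by ring]
    cases i with
    | zero => simp
    | succ i =>
      rw [map_sub, PowerSeries.coeff_C_mul, PowerSeries.coeff_succ_X_mul,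
        PowerSeries.coeff_mk, PowerSeries.coeff_mk, PowerSeries.coeff_one]
      simp [pow_succ, mul_comm]
  rw [← key, PowerSeries.coeff_mk]

lemma keyA (c : ℕ → ℝ) (n : ℕ) : ∀ N : ℕ, ∀ m ≤ n,
    PowerSeries.coeff m (∏ i ∈ Finset.Icc 1 N, (1 - C (c i) * X)⁻¹)
      = PowerSeries.coeff m
          (∏ k ∈ Finset.Icc 1 n, expPow (∑ i ∈ Finset.Icc 1 N, c i ^ k / k) k) := by
  intro N
  induction N with
  | zero =>
    intro m hm
    rw [show Finset.Icc 1 0 = (∅ : Finset ℕ) from by simp]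
    simp only [Finset.prod_empty, Finset.sum_empty]
    rw [Finset.prod_congr rfl fun k hk =>
      expPow_zero_left k (by have := (Finset.mem_Icc.mp hk).1; omega)]
    rw [Finset.prod_const_one]
  | succ N ih =>
    intro m hm
    rw [Finset.prod_Icc_succ_top (Nat.succ_le_succ (Nat.zero_le N)), PowerSeries.coeff_mul]
    have hsplit : ∀ k ∈ Finset.Icc 1 n,
        expPow (∑ i ∈ Finset.Icc 1 (N + 1), c i ^ k / k) k
        = expPow (∑ i ∈ Finset.Icc 1 N, c i ^ k / k) k * expPow (c (N + 1) ^ k / k) k := by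
      intro k hk
      have hk1 : k ≠ 0 := by have := (Finset.mem_Icc.mp hk).1; omega
      rw [expPow_mul_expPow _ _ _ hk1, Finset.sum_Icc_succ_top (Nat.succ_le_succ (Nat.zero_le N))]
    rw [Finset.prod_congr rfl hsplit, Finset.prod_mul_distrib, PowerSeries.coeff_mul]
    apply Finset.sum_congr rfl
    intro p hp
    have hmem := Finset.HasAntidiagonal.mem_antidiagonal.mp hp
    rw [ih p.1 (by omega), coeff_inv_one_sub_CX,
      coeff_prod_expPow_geom (c (N + 1)) n p.2 (by omega)]

theorem stmt3 (q : ℝ) (hq : 1 < q) (n : ℕ) :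
    Tendsto
      (fun N => PowerSeries.coeff n (∏ i ∈ Finset.Icc 1 N, (1 - C (q⁻¹ ^ i) * X)⁻¹))
      atTop
      (𝓝 (PowerSeries.coeff n
        (∏ k ∈ Finset.Icc 1 n, expPow (1 / ((q ^ k - 1) * k)) k))) := by
  have hq0 : (0:ℝ) < q := lt_trans one_pos hq
  have hmain : ∀ N, PowerSeries.coeff n
        (∏ i ∈ Finset.Icc 1 N, (1 - C (q⁻¹ ^ i) * X)⁻¹)
      = ∑ l ∈ Finset.finsuppAntidiag (Finset.Icc 1 n) n, ∏ k ∈ Finset.Icc 1 n,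
          (if k ∣ l k then
            (∑ i ∈ Finset.Icc 1 N, (q⁻¹ ^ i) ^ k / k) ^ (l k / k) / ((l k / k).factorial : ℝ)
          else 0) := by
    intro N
    rw [keyA (fun i => q⁻¹ ^ i) n N n le_rfl, PowerSeries.coeff_prod]
    exact Finset.sum_congr rfl fun l _ => Finset.prod_congr rfl fun k _ => coeff_expPow _ _ _
  have htarget : PowerSeries.coeff n
        (∏ k ∈ Finset.Icc 1 n, expPow (1 / ((q ^ k - 1) * k)) k)
      = ∑ l ∈ Finset.finsuppAntidiag (Finset.Icc 1 n) n, ∏ k ∈ Finset.Icc 1 n,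
          (if k ∣ l k then
            (1 / ((q ^ k - 1) * k)) ^ (l k / k) / ((l k / k).factorial : ℝ)
          else 0) := by
    rw [PowerSeries.coeff_prod]
    exact Finset.sum_congr rfl fun l _ => Finset.prod_congr rfl fun k _ => coeff_expPow _ _ _
  simp only [hmain, htarget]
  apply tendsto_finset_sum
  intro l _
  apply tendsto_finset_prod
  intro k hk
  have hk1 : k ≠ 0 := by have := (Finset.mem_Icc.mp hk).1; omega
  by_cases hdvd : k ∣ l k
  · simp only [if_pos hdvd]
    apply Filter.Tendsto.div_const
    apply Filter.Tendsto.pow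
    -- geometric limit
    have hqk1 : (1:ℝ) < q ^ k := one_lt_pow₀ hq hk1
    have hqk0 : (q:ℝ) ^ k ≠ 0 := by positivity
    have hqk1' : q ^ k - 1 ≠ 0 := by linarith
    set r : ℝ := q⁻¹ ^ k with hr
    have hr0 : 0 ≤ r := by positivity
    have hr1 : r < 1 := by
      rw [hr, inv_pow]
      exact inv_lt_one_of_one_lt₀ hqk1
    have hgeom := (hasSum_geometric_of_lt_one hr0 hr1).tendsto_sum_nat
    have hfun : ∀ N, ∑ i ∈ Finset.Icc 1 N, (q⁻¹ ^ i) ^ k / (k:ℝ)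
        = (r * ∑ i ∈ Finset.range N, r ^ i) / k := by
      intro N
      rw [← Finset.sum_div]
      congr 1
      rw [Finset.mul_sum]
      rw [← Finset.Ico_add_one_right_eq_Icc, Finset.sum_Ico_eq_sum_range]
      apply Finset.sum_congr (by simp)
      intro i _
      rw [pow_right_comm, ← hr, ← pow_succ', add_comm]
    have hlim : (r * (1 - r)⁻¹) / (k:ℝ) = 1 / ((q ^ k - 1) * k) := by
      rw [hr, inv_pow]
      field_simp
    simp only [hfun]
    rw [← hlim]
    exact (Filter.Tendsto.const_mul r hgeom).div_const _
  · simp only [if_neg hdvd]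
    exact tendsto_const_nhds
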